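/- Let t > −1 and let n > 0, k ≥ 0 be integers. Then there exists C > 0 such that for all s ∈ (0,1), Φ^{(t)}_{n,k}(s) ≤ C·s^{−n−k+1/2}·(1−s)^k and 𝓖^{(t)}_{n+k}Φ^{(t)}_{n,k}(s) ≤ C·s^{−n−k−1/2}·(1−s)^k. -/

import Mathlib

open MeasureTheory
open Set

/-- `𝓕^{(t)}_m φ(s) = ∫_s^1 r^{m−1} φ(r) (1−r)^t dr`. -/
noncomputable def Ft (t : ℝ) (m : ℕ) (φ : ℝ → ℝ) (s : ℝ) : ℝ :=
  ∫ r in Set.Ioo s 1, r ^ (m - 1) * φ r * (1 - r) ^ t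

/-- `𝓖^{(t)}_m φ(s) = 𝓕^{(t)}_m φ(s) / (s^m (1−s)^{t+1})`. -/
noncomputable def Gt (t : ℝ) (m : ℕ) (φ : ℝ → ℝ) (s : ℝ) : ℝ :=
  Ft t m φ s / (s ^ m * (1 - s) ^ (t + 1))

/-- `Φ^{(t)}_{n,0} ≡ 1` and `Φ^{(t)}_{n,k+1}(s) = (1−s) (𝓖^{(t)}_{n+k})² Φ^{(t)}_{n,k}(s)`. -/
noncomputable def Phi (t : ℝ) (n : ℕ) : ℕ → ℝ → ℝ
  | 0 => fun _ => 1
  | k + 1 => fun s => (1 - s) * Gt t (n + k) (Gt t (n + k) (Phi t n k)) s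

/-- Asymptotic behavior of the auxiliary functions `Φ^{(t)}_{n,k}`:
`Φ^{(t)}_{n,k}(s) ≲ s^{−n−k+1/2}(1−s)^k` and
`𝓖^{(t)}_{n+k}Φ^{(t)}_{n,k}(s) ≲ s^{−n−k−1/2}(1−s)^k`. -/
lemma hasDerivF (t : ℝ) {r : ℝ} (hr : r ∈ Set.Ioo (0:ℝ) 1) :
    HasDerivAt (fun x : ℝ => x ^ (-(1:ℝ)/2) * (1-x) ^ (t+1))
      ((-(1:ℝ)/2) * r ^ (-(1:ℝ)/2 - 1) * (1-r)^(t+1)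
        + r ^ (-(1:ℝ)/2) * ((t+1) * (1-r)^t * (-1))) r := by
  have h1 : HasDerivAt (fun x : ℝ => x ^ (-(1:ℝ)/2))
      ((-(1:ℝ)/2) * r ^ (-(1:ℝ)/2 - 1)) r :=
    Real.hasDerivAt_rpow_const (Or.inl (ne_of_gt hr.1))
  have h2 : HasDerivAt (fun x : ℝ => (1-x) ^ (t+1)) ((t+1) * (1-r)^t * (-1)) r := by
    have hb : HasDerivAt (fun y : ℝ => y ^ (t+1)) ((t+1) * (1-r)^(t+1-1)) (1-r) :=
      Real.hasDerivAt_rpow_const (Or.inl (by have := hr.2; intro h; linarith [h] ))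
    have hlin : HasDerivAt (fun x : ℝ => 1 - x) (-1) r := by
      simpa using (hasDerivAt_id r).const_sub 1
    have := hb.comp r hlin
    simpa [add_sub_cancel_right, Function.comp_def] using this
  simpa [Pi.mul_def] using h1.mul h2

lemma core_bound (t : ℝ) (ht : -1 < t) :
    ∃ K : ℝ, 0 < K ∧ ∀ s ∈ Set.Ioo (0:ℝ) 1,
      IntegrableOn (fun r : ℝ => r ^ (-(3:ℝ)/2) * (1 - r) ^ t) (Set.Ioo s 1) volume ∧
      (∫ r in Set.Ioo s 1, r ^ (-(3:ℝ)/2) * (1 - r) ^ t)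
        ≤ K * s ^ (-(1:ℝ)/2) * (1 - s) ^ (t + 1) := by
  have ht1 : (0:ℝ) < t + 1 := by linarith
  set ε : ℝ := min (1/2) (t+1) with hε
  have hε0 : 0 < ε := lt_min (by norm_num) ht1
  refine ⟨ε⁻¹, inv_pos.mpr hε0, ?_⟩
  intro s hs
  obtain ⟨hs0, hs1⟩ := hs
  set F : ℝ → ℝ := fun x => x ^ (-(1:ℝ)/2) * (1-x) ^ (t+1) with hF
  set F' : ℝ → ℝ := fun r => (-(1:ℝ)/2) * r ^ (-(1:ℝ)/2 - 1) * (1-r)^(t+1)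
      + r ^ (-(1:ℝ)/2) * ((t+1) * (1-r)^t * (-1)) with hF'
  -- interval integrability of F'
  have hi_t : IntervalIntegrable (fun x : ℝ => (1-x) ^ t) volume s 1 := by
    have := (intervalIntegral.intervalIntegrable_rpow' (a := 1 - s) (b := 0) ht).comp_sub_left 1
    simpa using this
  have hi_t1 : IntervalIntegrable (fun x : ℝ => (1-x) ^ (t+1)) volume s 1 := by
    have := (intervalIntegral.intervalIntegrable_rpow' (a := 1 - s) (b := 0) (by linarith : (-1:ℝ) < t+1)).comp_sub_left 1
    simpa using this
  have hIccpos : ∀ x ∈ Set.uIcc s 1, x ≠ 0 := by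
    rw [Set.uIcc_of_le hs1.le]
    intro x hx
    exact ne_of_gt (lt_of_lt_of_le hs0 hx.1)
  have hcm32 : ContinuousOn (fun x : ℝ => (-(1:ℝ)/2) * x ^ (-(1:ℝ)/2 - 1)) (Set.uIcc s 1) :=
    continuousOn_const.mul (continuousOn_id.rpow_const fun x hx => Or.inl (hIccpos x hx))
  have hcm12 : ContinuousOn (fun x : ℝ => x ^ (-(1:ℝ)/2)) (Set.uIcc s 1) :=
    continuousOn_id.rpow_const fun x hx => Or.inl (hIccpos x hx)
  have hiF' : IntervalIntegrable F' volume s 1 := by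
    apply IntervalIntegrable.add
    · exact hi_t1.continuousOn_mul hcm32
    · have : IntervalIntegrable (fun x : ℝ => (t+1) * (1-x) ^ t * (-1)) volume s 1 := by
        simpa [mul_comm, mul_assoc, Pi.neg_def] using (hi_t.const_mul (t+1)).neg
      exact this.continuousOn_mul hcm12
  -- continuity of F on Icc s 1
  have hcF : ContinuousOn F (Set.Icc s 1) := by
    apply ContinuousOn.mul
    · exact continuousOn_id.rpow_const fun x hx => Or.inl (ne_of_gt (lt_of_lt_of_le hs0 hx.1))
    · have hc : Continuous fun x : ℝ => (1-x) ^ (t+1) := by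
        have : ∀ x : ℝ, ContinuousAt (fun y : ℝ => y ^ (t+1)) x := fun x =>
          Real.continuousAt_rpow_const x (t+1) (Or.inr ht1.le)
        exact (continuous_iff_continuousAt.mpr fun x =>
          (this (1-x)).comp (by fun_prop))
      exact hc.continuousOn
  -- FTC
  have hftc : ∫ x in s..1, F' x = F 1 - F s := by
    apply intervalIntegral.integral_eq_sub_of_hasDeriv_right_of_le hs1.le hcF ?_ hiF'
    intro x hx
    exact (hasDerivF t ⟨hs0.trans hx.1, hx.2⟩).hasDerivWithinAt
  have hF1 : F 1 = 0 := by
    simp [hF, Real.zero_rpow (ne_of_gt ht1)]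
  have hIoo : ∫ r in Set.Ioo s 1, F' r = - F s := by
    rw [← MeasureTheory.integral_Ioc_eq_integral_Ioo, ← intervalIntegral.integral_of_le hs1.le,
      hftc, hF1]; ring
  -- pointwise domination
  have hpt : ∀ r ∈ Set.Ioo s 1, r ^ (-(3:ℝ)/2) * (1 - r) ^ t ≤ ε⁻¹ * (- F' r) := by
    intro r hr
    have hr0 : 0 < r := hs0.trans hr.1
    have h1r : 0 < 1 - r := by have := hr.2; linarith
    have e1 : (1-r)^(t+1) = (1-r)^t * (1-r) := Real.rpow_add_one (ne_of_gt h1r) t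
    have e2 : r ^ (-(1:ℝ)/2) = r ^ (-(3:ℝ)/2) * r := by
      rw [← Real.rpow_add_one (ne_of_gt hr0)]; norm_num
    have e3 : r ^ (-(1:ℝ)/2 - 1) = r ^ (-(3:ℝ)/2) := by norm_num
    have hFr : - F' r = (r ^ (-(3:ℝ)/2) * (1-r)^t) * ((1/2)*(1-r) + (t+1)*r) := by
      simp only [hF', e1, e2, e3]; ring
    have hconv : ε ≤ (1/2)*(1-r) + (t+1)*r := by
      have h1 : ε * (1-r) ≤ (1/2)*(1-r) := mul_le_mul_of_nonneg_right (min_le_left _ _) h1r.le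
      have h2 : ε * r ≤ (t+1)*r := mul_le_mul_of_nonneg_right (min_le_right _ _) hr0.le
      nlinarith
    have hpos : 0 ≤ r ^ (-(3:ℝ)/2) * (1-r)^t :=
      mul_nonneg (Real.rpow_nonneg hr0.le _) (Real.rpow_nonneg h1r.le _)
    rw [hFr, le_inv_mul_iff₀ hε0]
    calc ε * (r ^ (-(3:ℝ)/2) * (1 - r) ^ t)
        = (r ^ (-(3:ℝ)/2) * (1 - r) ^ t) * ε := by ring
      _ ≤ (r ^ (-(3:ℝ)/2) * (1-r)^t) * ((1/2)*(1-r) + (t+1)*r) :=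
          mul_le_mul_of_nonneg_left hconv hpos
  have hmeas : AEStronglyMeasurable (fun r : ℝ => r ^ (-(3:ℝ)/2) * (1-r)^t)
      (volume.restrict (Set.Ioo s 1)) := by
    apply ContinuousOn.aestronglyMeasurable _ measurableSet_Ioo
    apply ContinuousOn.mul
    · exact continuousOn_id.rpow_const fun x hx => Or.inl (ne_of_gt (hs0.trans hx.1))
    · exact ContinuousOn.rpow_const (by fun_prop) fun x hx =>
        Or.inl (by have := hx.2; intro h; linarith)
  have hg : Integrable (fun r : ℝ => ε⁻¹ * (- F' r)) (volume.restrict (Set.Ioo s 1)) := by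
    have : IntegrableOn F' (Set.Ioo s 1) volume :=
      (hiF'.1).mono_set Set.Ioo_subset_Ioc_self
    exact (this.neg.const_mul _)
  have h0ae : 0 ≤ᵐ[volume.restrict (Set.Ioo s 1)]
      fun r : ℝ => r ^ (-(3:ℝ)/2) * (1-r)^t := by
    refine (ae_restrict_iff' measurableSet_Ioo).mpr (Filter.Eventually.of_forall fun r hr => ?_)
    have hr0 : 0 < r := hs0.trans hr.1
    have h1r : 0 < 1 - r := by have := hr.2; linarith
    exact mul_nonneg (Real.rpow_nonneg hr0.le _) (Real.rpow_nonneg h1r.le _)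
  have hleae : (fun r : ℝ => r ^ (-(3:ℝ)/2) * (1-r)^t)
      ≤ᵐ[volume.restrict (Set.Ioo s 1)] fun r : ℝ => ε⁻¹ * (- F' r) :=
    (ae_restrict_iff' measurableSet_Ioo).mpr (Filter.Eventually.of_forall hpt)
  have hint : IntegrableOn (fun r : ℝ => r ^ (-(3:ℝ)/2) * (1-r)^t) (Set.Ioo s 1) volume := by
    apply Integrable.mono' hg hmeas
    filter_upwards [h0ae, hleae] with r h0 hle
    rwa [Real.norm_eq_abs, abs_of_nonneg h0]
  refine ⟨hint, ?_⟩
  have hmono := integral_mono_of_nonneg h0ae hg hleae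
  have heq : ∫ r in Set.Ioo s 1, ε⁻¹ * (- F' r) = ε⁻¹ * F s := by
    rw [MeasureTheory.integral_const_mul, integral_neg, hIoo]; ring
  calc (∫ r in Set.Ioo s 1, r ^ (-(3:ℝ)/2) * (1 - r) ^ t)
      ≤ ∫ r in Set.Ioo s 1, ε⁻¹ * (- F' r) := hmono
    _ = ε⁻¹ * F s := heq
    _ = ε⁻¹ * s ^ (-(1:ℝ)/2) * (1-s)^(t+1) := by rw [hF]; ring


lemma Gt_nonneg (t : ℝ) (m : ℕ) (φ : ℝ → ℝ) (hφ0 : ∀ r ∈ Set.Ioo (0:ℝ) 1, 0 ≤ φ r)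
    {s : ℝ} (hs : s ∈ Set.Ioo (0:ℝ) 1) : 0 ≤ Gt t m φ s := by
  unfold Gt Ft
  apply div_nonneg
  · apply MeasureTheory.setIntegral_nonneg measurableSet_Ioo
    intro r hr
    have hr0 : 0 < r := hs.1.trans hr.1
    have h1r : (0:ℝ) ≤ 1 - r := by have := hr.2; linarith
    exact mul_nonneg (mul_nonneg (pow_nonneg hr0.le _) (hφ0 r ⟨hr0, hr.2⟩))
      (Real.rpow_nonneg h1r _)
  · exact mul_nonneg (pow_nonneg hs.1.le _)
      (Real.rpow_nonneg (by have := hs.2; linarith) _)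

lemma Phi_nonneg (t : ℝ) (n k : ℕ) : ∀ s ∈ Set.Ioo (0:ℝ) 1, 0 ≤ Phi t n k s := by
  induction k with
  | zero => intro s _; norm_num [Phi]
  | succ k ih =>
    intro s hs
    have h1 : ∀ r ∈ Set.Ioo (0:ℝ) 1, 0 ≤ Gt t (n+k) (Phi t n k) r :=
      fun r hr => Gt_nonneg t (n+k) _ ih hr
    have h2 : 0 ≤ Gt t (n+k) (Gt t (n+k) (Phi t n k)) s := Gt_nonneg t (n+k) _ h1 hs
    have h3 : (0:ℝ) ≤ 1 - s := by have := hs.2; linarith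
    simpa [Phi] using mul_nonneg h3 h2

lemma Gt_bound (t : ℝ) (ht : -1 < t) (m : ℕ) (hm : 1 ≤ m) (j : ℕ) (e : ℝ)
    (he : -(3:ℝ)/2 ≤ (m : ℝ) - 1 + e) (φ : ℝ → ℝ) (C : ℝ) (hC : 0 < C)
    (hφ0 : ∀ r ∈ Set.Ioo (0:ℝ) 1, 0 ≤ φ r)
    (hφ : ∀ r ∈ Set.Ioo (0:ℝ) 1, φ r ≤ C * r ^ e * (1 - r) ^ j) :
    ∃ D : ℝ, 0 < D ∧ ∀ s ∈ Set.Ioo (0:ℝ) 1,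
      Gt t m φ s ≤ D * s ^ (-(m : ℝ) - 1/2) * (1 - s) ^ j := by
  obtain ⟨K, hK, hKs⟩ := core_bound t ht
  refine ⟨C * K, mul_pos hC hK, ?_⟩
  intro s hs
  obtain ⟨hs0, hs1⟩ := hs
  obtain ⟨hint, hIbd⟩ := hKs s ⟨hs0, hs1⟩
  have ht1 : (0:ℝ) < t + 1 := by linarith
  have h1s : (0:ℝ) < 1 - s := by linarith
  have hFt : Ft t m φ s ≤ C * (1-s)^j * (K * s ^ (-(1:ℝ)/2) * (1-s)^(t+1)) := by
    have hg : Integrable (fun r : ℝ => (C * (1-s)^j) * (r ^ (-(3:ℝ)/2) * (1-r)^t))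
        (volume.restrict (Set.Ioo s 1)) := hint.const_mul _
    have h0 : 0 ≤ᵐ[volume.restrict (Set.Ioo s 1)]
        fun r : ℝ => r ^ (m-1) * φ r * (1-r)^t := by
      refine (ae_restrict_iff' measurableSet_Ioo).mpr (Filter.Eventually.of_forall fun r hr => ?_)
      have hr0 : 0 < r := hs0.trans hr.1
      have h1r : (0:ℝ) < 1 - r := by have := hr.2; linarith
      exact mul_nonneg (mul_nonneg (pow_nonneg hr0.le _) (hφ0 r ⟨hr0, hr.2⟩))
        (Real.rpow_nonneg h1r.le _)
    have hle : (fun r : ℝ => r ^ (m-1) * φ r * (1-r)^t)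
        ≤ᵐ[volume.restrict (Set.Ioo s 1)]
        fun r => (C * (1-s)^j) * (r ^ (-(3:ℝ)/2) * (1-r)^t) := by
      refine (ae_restrict_iff' measurableSet_Ioo).mpr (Filter.Eventually.of_forall fun r hr => ?_)
      have hr0 : 0 < r := hs0.trans hr.1
      have hr1 : r < 1 := hr.2
      have h1r : (0:ℝ) < 1 - r := by linarith
      have hpowe : (r : ℝ) ^ (m-1) * r ^ e ≤ r ^ (-(3:ℝ)/2) := by
        have h1 : (r : ℝ) ^ (m-1) = r ^ ((m:ℝ) - 1) := by
          rw [← Real.rpow_natCast r (m-1), Nat.cast_sub hm]; norm_num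
        rw [h1, ← Real.rpow_add hr0]
        exact Real.rpow_le_rpow_of_exponent_ge hr0 hr1.le he
      have hj : (1-r)^j ≤ (1-s)^j := pow_le_pow_left₀ h1r.le (by have := hr.1; linarith) j
      have hmid : (r ^ (m-1) * r ^ e) * (1-r)^j ≤ r ^ (-(3:ℝ)/2) * (1-s)^j :=
        mul_le_mul hpowe hj (pow_nonneg h1r.le _) (Real.rpow_nonneg hr0.le _)
      have step1 : r ^ (m-1) * φ r * (1-r)^t
          ≤ r ^ (m-1) * (C * r ^ e * (1-r)^j) * (1-r)^t :=
        mul_le_mul_of_nonneg_right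
          (mul_le_mul_of_nonneg_left (hφ r ⟨hr0, hr1⟩) (pow_nonneg hr0.le _))
          (Real.rpow_nonneg h1r.le _)
      have step2 : r ^ (m-1) * (C * r ^ e * (1-r)^j) * (1-r)^t
          ≤ (C * (1-s)^j) * (r ^ (-(3:ℝ)/2) * (1-r)^t) := by
        have h2 := mul_le_mul_of_nonneg_left hmid hC.le
        calc r ^ (m-1) * (C * r ^ e * (1-r)^j) * (1-r)^t
            = (C * ((r ^ (m-1) * r ^ e) * (1-r)^j)) * (1-r)^t := by ring
          _ ≤ (C * (r ^ (-(3:ℝ)/2) * (1-s)^j)) * (1-r)^t :=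
              mul_le_mul_of_nonneg_right h2 (Real.rpow_nonneg h1r.le _)
          _ = (C * (1-s)^j) * (r ^ (-(3:ℝ)/2) * (1-r)^t) := by ring
      exact step1.trans step2
    have hmono := integral_mono_of_nonneg h0 hg hle
    have heq : ∫ r in Set.Ioo s 1, (C * (1-s)^j) * (r ^ (-(3:ℝ)/2) * (1-r)^t)
        = (C * (1-s)^j) * ∫ r in Set.Ioo s 1, r ^ (-(3:ℝ)/2) * (1-r)^t :=
      MeasureTheory.integral_const_mul _ _
    unfold Ft
    calc (∫ r in Set.Ioo s 1, r ^ (m-1) * φ r * (1-r)^t)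
        ≤ ∫ r in Set.Ioo s 1, (C * (1-s)^j) * (r ^ (-(3:ℝ)/2) * (1-r)^t) := hmono
      _ = (C * (1-s)^j) * ∫ r in Set.Ioo s 1, r ^ (-(3:ℝ)/2) * (1-r)^t := heq
      _ ≤ (C * (1-s)^j) * (K * s ^ (-(1:ℝ)/2) * (1-s)^(t+1)) := by
          apply mul_le_mul_of_nonneg_left hIbd
          exact mul_nonneg hC.le (pow_nonneg h1s.le _)
      _ = C * (1-s)^j * (K * s ^ (-(1:ℝ)/2) * (1-s)^(t+1)) := by ring
  have hden : 0 < s ^ m * (1-s)^(t+1) :=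
    mul_pos (pow_pos hs0 m) (Real.rpow_pos_of_pos h1s _)
  have hGt : Gt t m φ s
      ≤ (C * (1-s)^j * (K * s ^ (-(1:ℝ)/2) * (1-s)^(t+1))) / (s ^ m * (1-s)^(t+1)) := by
    unfold Gt
    exact div_le_div_of_nonneg_right hFt hden.le
  have heq2 : (C * (1-s)^j * (K * s ^ (-(1:ℝ)/2) * (1-s)^(t+1))) / (s ^ m * (1-s)^(t+1))
      = (C * K) * s ^ (-(m : ℝ) - 1/2) * (1-s)^j := by
    have hsm : (s:ℝ) ^ m = s ^ (m:ℝ) := (Real.rpow_natCast s m).symm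
    have hpow : s ^ (-(m:ℝ) - 1/2) = s ^ (-(1:ℝ)/2) / s ^ (m:ℝ) := by
      rw [← Real.rpow_sub hs0]; congr 1; ring
    have hne1 : (1-s)^(t+1) ≠ 0 := ne_of_gt (Real.rpow_pos_of_pos h1s _)
    have hne2 : s ^ (m:ℝ) ≠ 0 := ne_of_gt (Real.rpow_pos_of_pos hs0 _)
    rw [hpow, hsm]
    field_simp
  rw [heq2] at hGt
  exact hGt


theorem stmt8 (t : ℝ) (ht : -1 < t) (n k : ℕ) (hn : 0 < n) :
    ∃ C : ℝ, 0 < C ∧ ∀ s ∈ Set.Ioo (0 : ℝ) 1,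
      Phi t n k s ≤ C * s ^ (-(n : ℝ) - k + 1 / 2) * (1 - s) ^ k ∧
      Gt t (n + k) (Phi t n k) s ≤ C * s ^ (-(n : ℝ) - k - 1 / 2) * (1 - s) ^ k := by
  have hn1 : (1:ℝ) ≤ n := by exact_mod_cast hn
  induction k with
  | zero =>
    have he : -(3:ℝ)/2 ≤ (n:ℝ) - 1 + (-(n:ℝ) + 1/2) := by linarith
    have hrpow : ∀ r ∈ Set.Ioo (0:ℝ) 1, (1:ℝ) ≤ r ^ (-(n:ℝ) + 1/2) := by
      intro r hr
      have h := Real.rpow_le_rpow_of_exponent_ge hr.1 hr.2.le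
        (show -(n:ℝ) + 1/2 ≤ 0 by linarith)
      simpa using h
    have hφ : ∀ r ∈ Set.Ioo (0:ℝ) 1, Phi t n 0 r ≤ 1 * r ^ (-(n:ℝ) + 1/2) * (1-r)^(0:ℕ) := by
      intro r hr
      simpa [Phi] using hrpow r hr
    obtain ⟨D, hD, hDs⟩ := Gt_bound t ht n hn 0 (-(n:ℝ) + 1/2) he (Phi t n 0) 1 one_pos
      (fun r _ => by simp [Phi]) hφ
    refine ⟨max D 1, lt_of_lt_of_le one_pos (le_max_right _ _), ?_⟩
    intro s hs
    have hs0 := hs.1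
    have hXpos : 0 < s ^ (-(n:ℝ) - (0:ℕ) + 1/2) := Real.rpow_pos_of_pos hs0 _
    constructor
    · have h1 : (1:ℝ) ≤ s ^ (-(n:ℝ) - (0:ℕ) + 1/2) := by
        have := hrpow s hs
        rw [show -(n:ℝ) - (0:ℕ) + 1/2 = -(n:ℝ) + 1/2 by push_cast; ring]
        exact this
      have h2 : (1:ℝ) ≤ max D 1 := le_max_right _ _
      have : Phi t n 0 s = 1 := by simp [Phi]
      rw [this, pow_zero, mul_one]
      nlinarith
    · have hb := hDs s hs
      rw [show -(n:ℝ) - (0:ℕ) - 1/2 = -(n:ℝ) - 1/2 by push_cast; ring]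
      calc Gt t (n + 0) (Phi t n 0) s ≤ D * s ^ (-(n:ℝ) - 1/2) * (1-s)^(0:ℕ) := hb
        _ ≤ max D 1 * s ^ (-(n:ℝ) - 1/2) * (1-s)^(0:ℕ) := by
            apply mul_le_mul_of_nonneg_right _ (pow_nonneg (by have := hs.2; linarith) _)
            exact mul_le_mul_of_nonneg_right (le_max_left _ _)
              (Real.rpow_nonneg hs0.le _)
  | succ k ih =>
    obtain ⟨C, hC, hCs⟩ := ih
    have hψ0 : ∀ r ∈ Set.Ioo (0:ℝ) 1, 0 ≤ Gt t (n+k) (Phi t n k) r :=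
      fun r hr => Gt_nonneg t (n+k) _ (Phi_nonneg t n k) hr
    have hψ : ∀ r ∈ Set.Ioo (0:ℝ) 1,
        Gt t (n+k) (Phi t n k) r ≤ C * r ^ (-(n:ℝ) - k - 1/2) * (1-r)^k :=
      fun r hr => (hCs r hr).2
    have he1 : -(3:ℝ)/2 ≤ ((n+k:ℕ):ℝ) - 1 + (-(n:ℝ) - k - 1/2) := by push_cast; linarith
    obtain ⟨D₁, hD₁, hD₁s⟩ := Gt_bound t ht (n+k) (by omega) k (-(n:ℝ) - k - 1/2) he1
      (Gt t (n+k) (Phi t n k)) C hC hψ0 hψ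
    have hPhi1 : ∀ s ∈ Set.Ioo (0:ℝ) 1,
        Phi t n (k+1) s ≤ D₁ * s ^ (-(n:ℝ) - ((k+1:ℕ):ℝ) + 1/2) * (1-s)^(k+1) := by
      intro s hs
      have hb := hD₁s s hs
      have h1s : (0:ℝ) ≤ 1 - s := by have := hs.2; linarith
      calc Phi t n (k+1) s = (1-s) * Gt t (n+k) (Gt t (n+k) (Phi t n k)) s := by simp [Phi]
        _ ≤ (1-s) * (D₁ * s ^ (-((n+k:ℕ):ℝ) - 1/2) * (1-s)^k) :=
            mul_le_mul_of_nonneg_left hb h1s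
        _ = D₁ * s ^ (-(n:ℝ) - ((k+1:ℕ):ℝ) + 1/2) * (1-s)^(k+1) := by
            rw [show -((n+k:ℕ):ℝ) - 1/2 = -(n:ℝ) - ((k+1:ℕ):ℝ) + 1/2 by push_cast; ring]
            ring
    have hPhi0 : ∀ s ∈ Set.Ioo (0:ℝ) 1, 0 ≤ Phi t n (k+1) s := Phi_nonneg t n (k+1)
    have he2 : -(3:ℝ)/2 ≤ ((n+(k+1):ℕ):ℝ) - 1 + (-(n:ℝ) - ((k+1:ℕ):ℝ) + 1/2) := by
      push_cast; linarith
    obtain ⟨D₂, hD₂, hD₂s⟩ := Gt_bound t ht (n+(k+1)) (by omega) (k+1)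
      (-(n:ℝ) - ((k+1:ℕ):ℝ) + 1/2) he2 (Phi t n (k+1)) D₁ hD₁ hPhi0 hPhi1
    refine ⟨max D₁ D₂, lt_of_lt_of_le hD₁ (le_max_left _ _), ?_⟩
    intro s hs
    have hs0 := hs.1
    have h1s : (0:ℝ) ≤ 1 - s := by have := hs.2; linarith
    constructor
    · calc Phi t n (k+1) s ≤ D₁ * s ^ (-(n:ℝ) - ((k+1:ℕ):ℝ) + 1/2) * (1-s)^(k+1) :=
            hPhi1 s hs
        _ ≤ max D₁ D₂ * s ^ (-(n:ℝ) - ((k+1:ℕ):ℝ) + 1/2) * (1-s)^(k+1) :=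
            mul_le_mul_of_nonneg_right
              (mul_le_mul_of_nonneg_right (le_max_left _ _) (Real.rpow_nonneg hs0.le _))
              (pow_nonneg h1s _)
    · have hb := hD₂s s hs
      calc Gt t (n+(k+1)) (Phi t n (k+1)) s
          ≤ D₂ * s ^ (-((n+(k+1):ℕ):ℝ) - 1/2) * (1-s)^(k+1) := hb
        _ = D₂ * s ^ (-(n:ℝ) - ((k+1:ℕ):ℝ) - 1/2) * (1-s)^(k+1) := by
            rw [show -((n+(k+1):ℕ):ℝ) - 1/2 = -(n:ℝ) - ((k+1:ℕ):ℝ) - 1/2 by push_cast; ring]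
        _ ≤ max D₁ D₂ * s ^ (-(n:ℝ) - ((k+1:ℕ):ℝ) - 1/2) * (1-s)^(k+1) :=
            mul_le_mul_of_nonneg_right
              (mul_le_mul_of_nonneg_right (le_max_right _ _) (Real.rpow_nonneg hs0.le _))
              (pow_nonneg h1s _)
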